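/- Let Ω ∈ (0,1) be a quadratic irrational whose continued fraction is purely m-periodic, with associated matrices T, U and eigenvalue λ > 1. Then a quasi-resonance k ∈ A is primitive (i.e. U⁻¹k ∉ A) if and only if 1/(2λ) < |⟨k,ω⟩| < 1/2. -/

import Mathlib

open Real Filter Matrix

noncomputable section

/-- Orbit of the Gauss map `g(x) = {1/x}` starting at `Ω`:
`x₀ = Ω`, `x_{j+1} = g(x_j)`. -/
def gaussOrbit (Ω : ℝ) : ℕ → ℝ
  | 0 => Ω
  | j + 1 => Int.fract (1 / gaussOrbit Ω j)

/-- `cfA Ω j` is the partial quotient `a_{j+1}` of the continued fraction of `Ω`. -/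
def cfA (Ω : ℝ) (j : ℕ) : ℤ := ⌊1 / gaussOrbit Ω j⌋

/-- The matrix `[[a, 1], [1, 0]]`. -/
def Acf (a : ℤ) : Matrix (Fin 2) (Fin 2) ℤ := !![a, 1; 1, 0]

/-- The product `A₁ ⋯ A_m` with `A_i = [[a_i, 1], [1, 0]]`. -/
def cfMatProd (Ω : ℝ) (m : ℕ) : Matrix (Fin 2) (Fin 2) ℤ :=
  ((List.range m).map fun i => Acf (cfA Ω i)).prod

/-- `cfQ Ω (j+1) = q_j`:  `q₋₁ = 0`, `q₀ = 1`, `q_j = a_j q_{j-1} + q_{j-2}`. -/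
def cfQ (Ω : ℝ) : ℕ → ℤ
  | 0 => 0
  | 1 => 1
  | j + 2 => cfA Ω j * cfQ Ω (j + 1) + cfQ Ω j

/-- `cfP Ω (j+1) = p_j`:  `p₋₁ = 1`, `p₀ = 0`, `p_j = a_j p_{j-1} + p_{j-2}`. -/
def cfP (Ω : ℝ) : ℕ → ℤ
  | 0 => 1
  | 1 => 0
  | j + 2 => cfA Ω j * cfP Ω (j + 1) + cfP Ω j

/-- The vector convergent `w(j) = (q_j, p_j)`. -/
def wconv (Ω : ℝ) (j : ℕ) : Fin 2 → ℤ := ![cfQ Ω (j + 1), cfP Ω (j + 1)]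

/-- The resonant convergent `v(j) = (−p_j, q_j)`. -/
def vconv (Ω : ℝ) (j : ℕ) : Fin 2 → ℤ := ![-cfP Ω (j + 1), cfQ Ω (j + 1)]

/-- A quadratic irrational number. -/
def IsQuadraticIrrational (Ω : ℝ) : Prop :=
  Irrational Ω ∧ ∃ A B C : ℤ, A ≠ 0 ∧ (A : ℝ) * Ω ^ 2 + (B : ℝ) * Ω + (C : ℝ) = 0

end
noncomputable section

/-- `⟨k, ω⟩ = k₁ + k₂ Ω` for `ω = (1, Ω)`. -/
def pairω (Ω : ℝ) (k : Fin 2 → ℤ) : ℝ := (k 0 : ℝ) + (k 1 : ℝ) * Ω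

/-- `|k|₁ = |k₁| + |k₂|`. -/
def norm1 (k : Fin 2 → ℤ) : ℤ := |k 0| + |k 1|

/-- `p⁰(q)`: the integer nearest to `qΩ`. -/
def p0 (Ω : ℝ) (q : ℤ) : ℤ := round ((q : ℝ) * Ω)

/-- `k⁰(q) = (−p⁰(q), q)`. -/
def kzero (Ω : ℝ) (q : ℤ) : Fin 2 → ℤ := ![-p0 Ω q, q]

/-- The set `A` of quasi-resonances: vectors `k⁰(q)`, `q ≥ 1`, with `|⟨k,ω⟩| < 1/2`. -/
def inA (Ω : ℝ) (k : Fin 2 → ℤ) : Prop :=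
  ∃ q : ℤ, 1 ≤ q ∧ k = kzero Ω q ∧ |pairω Ω k| < 1 / 2

/-- A quasi-resonance `k` is primitive if `U⁻¹k` is not a quasi-resonance. -/
def PrimitiveVec (Ω : ℝ) (U : Matrix (Fin 2) (Fin 2) ℤ) (k : Fin 2 → ℤ) : Prop :=
  inA Ω k ∧ ¬inA Ω (U⁻¹.mulVec k)

/-- A primitive integer `q ≥ 1`. -/
def PrimitiveInt (Ω : ℝ) (U : Matrix (Fin 2) (Fin 2) ℤ) (q : ℤ) : Prop :=
  1 ≤ q ∧ PrimitiveVec Ω U (kzero Ω q)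

/-- The resonant sequence `s(q, n) = Uⁿ k⁰(q)`. -/
def sres (Ω : ℝ) (U : Matrix (Fin 2) (Fin 2) ℤ) (q : ℤ) (n : ℕ) : Fin 2 → ℤ :=
  (U ^ n).mulVec (kzero Ω q)

/-- `U = σ (T⁻¹)ᵀ` with `σ = det T = (−1)^m` and `T = A₁⋯A_m`. -/
def Umat (Ω : ℝ) (m : ℕ) : Matrix (Fin 2) (Fin 2) ℤ :=
  ((-1 : ℤ) ^ m) • ((cfMatProd Ω m)⁻¹)ᵀ

/-- The numerator `γ_k = |⟨k,ω⟩| · |k|₁`. -/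
def gammaK (Ω : ℝ) (k : Fin 2 → ℤ) : ℝ := |pairω Ω k| * (norm1 k : ℝ)

/-- `K_q = |z_q|(1+Ω)/|c+bΩ²|`, where `z_q = cq + bpΩ`, `p = p⁰(q)`,
and `b, c` are the off-diagonal entries of `T = A₁⋯A_m = [[a,b],[c,d]]`. -/
def KqD (Ω : ℝ) (m : ℕ) (q : ℤ) : ℝ :=
  |(cfMatProd Ω m 1 0 : ℝ) * (q : ℝ) + (cfMatProd Ω m 0 1 : ℝ) * (p0 Ω q : ℝ) * Ω| * (1 + Ω) /
    |(cfMatProd Ω m 1 0 : ℝ) + (cfMatProd Ω m 0 1 : ℝ) * Ω ^ 2|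

/-- The limit numerator `γ*_q = |r_q| K_q` with `r_q = qΩ − p⁰(q)`. -/
def gammaStarQ (Ω : ℝ) (m : ℕ) (q : ℤ) : ℝ :=
  |(q : ℝ) * Ω - (p0 Ω q : ℝ)| * KqD Ω m q

end

section auxsplit

lemma round_eq_of_abs_lt' {x : ℝ} {n : ℤ} (h : |x - n| < 1/2) : round x = n := by
  have h' := abs_lt.mp h
  rw [round_eq, Int.floor_eq_iff]
  constructor
  · push_cast; linarith [h'.1]
  · push_cast; linarith [h'.2]

lemma gaussOrbit_mem {Ω : ℝ} (h0 : 0 < Ω) (h1 : Ω < 1) (hirr : Irrational Ω) :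
    ∀ j, Irrational (gaussOrbit Ω j) ∧ 0 < gaussOrbit Ω j ∧ gaussOrbit Ω j < 1 := by
  intro j
  induction j with
  | zero => exact ⟨hirr, h0, h1⟩
  | succ n ih =>
    obtain ⟨hi, hp, hl⟩ := ih
    have hinv : Irrational (1 / gaussOrbit Ω n) := by
      rw [one_div]; exact hi.inv
    have hfr : Irrational (Int.fract (1 / gaussOrbit Ω n)) := by
      rw [Int.fract]; exact hinv.sub_intCast _
    have hdef : gaussOrbit Ω (n+1) = Int.fract (1 / gaussOrbit Ω n) := rfl
    rw [hdef]
    exact ⟨hfr, lt_of_le_of_ne (Int.fract_nonneg _) (Ne.symm hfr.ne_zero),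
      Int.fract_lt_one _⟩

lemma one_le_cfA {Ω : ℝ} (h0 : 0 < Ω) (h1 : Ω < 1) (hirr : Irrational Ω) (j : ℕ) :
    1 ≤ cfA Ω j := by
  obtain ⟨-, hp, hl⟩ := gaussOrbit_mem h0 h1 hirr j
  rw [cfA, Int.le_floor]
  push_cast
  rw [le_div_iff₀ hp]
  linarith

lemma cfQ_props {Ω : ℝ} (ha : ∀ j, 1 ≤ cfA Ω j) :
    ∀ n, 0 ≤ cfQ Ω n ∧ cfQ Ω n ≤ cfQ Ω (n+1) := by
  intro n
  induction n with
  | zero => simp [cfQ]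
  | succ n ih =>
    refine ⟨le_trans ih.1 ih.2, ?_⟩
    show cfQ Ω (n+1) ≤ cfA Ω n * cfQ Ω (n+1) + cfQ Ω n
    nlinarith [ha n, ih.1, ih.2]

lemma one_le_cfQ {Ω : ℝ} (ha : ∀ j, 1 ≤ cfA Ω j) : ∀ n, 1 ≤ cfQ Ω (n+1) := by
  intro n
  induction n with
  | zero => simp [cfQ]
  | succ n ih => exact le_trans ih (cfQ_props ha (n+1)).2

lemma cfMatProd_eq (Ω : ℝ) :
    ∀ n, cfMatProd Ω n = !![cfQ Ω (n+1), cfQ Ω n; cfP Ω (n+1), cfP Ω n] := by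
  intro n
  induction n with
  | zero =>
    show (1 : Matrix (Fin 2) (Fin 2) ℤ) = _
    rw [Matrix.one_fin_two]
    rfl
  | succ n ih =>
    have h : cfMatProd Ω (n+1) = cfMatProd Ω n * Acf (cfA Ω n) := by
      rw [cfMatProd, cfMatProd, List.range_succ, List.map_append, List.prod_append]
      simp
    rw [h, ih, Acf]
    have hq : cfQ Ω (n+2) = cfA Ω n * cfQ Ω (n+1) + cfQ Ω n := rfl
    have hp : cfP Ω (n+2) = cfA Ω n * cfP Ω (n+1) + cfP Ω n := rfl
    ext i j
    fin_cases i <;> fin_cases j <;>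
      simp [Matrix.mul_apply, Fin.sum_univ_two, hq, hp] <;> ring

lemma det_cfMatProd (Ω : ℝ) : ∀ n, (cfMatProd Ω n).det = (-1)^n := by
  intro n
  induction n with
  | zero => simp [cfMatProd]
  | succ n ih =>
    have h : cfMatProd Ω (n+1) = cfMatProd Ω n * Acf (cfA Ω n) := by
      rw [cfMatProd, cfMatProd, List.range_succ, List.map_append, List.prod_append]
      simp
    rw [h, Matrix.det_mul, ih, Acf, Matrix.det_fin_two_of]
    ring

lemma Tinv' (Ω : ℝ) (m : ℕ) :
    (cfMatProd Ω m)⁻¹ = ((-1:ℤ)^m) • (cfMatProd Ω m).adjugate := by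
  apply Matrix.inv_eq_right_inv
  rw [Matrix.mul_smul, Matrix.mul_adjugate, det_cfMatProd, smul_smul, ← mul_pow]
  norm_num

lemma Umat_eq' (Ω : ℝ) (m : ℕ) : Umat Ω m = ((cfMatProd Ω m).adjugate)ᵀ := by
  rw [Umat, Tinv', Matrix.transpose_smul, smul_smul, ← mul_pow]
  norm_num

lemma Uinv' (Ω : ℝ) (m : ℕ) :
    (Umat Ω m)⁻¹ = ((-1:ℤ)^m) • (cfMatProd Ω m)ᵀ := by
  rw [Umat_eq']
  apply Matrix.inv_eq_right_inv
  rw [Matrix.mul_smul, ← Matrix.transpose_mul, Matrix.mul_adjugate, det_cfMatProd,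
    Matrix.transpose_smul, Matrix.transpose_one, smul_smul, ← mul_pow]
  norm_num

end auxsplit


/-- The fundamental property of primitive vectors: a quasi-resonance `k ∈ A` is
primitive (i.e. `U⁻¹k ∉ A`) if and only if `1/(2λ) < |⟨k,ω⟩| < 1/2`. -/
theorem splitting_quadratic_stmt6
    (Ω : ℝ) (m : ℕ) (hm : 1 ≤ m) (h0 : 0 < Ω) (h1 : Ω < 1)
    (hquad : IsQuadraticIrrational Ω)
    (hper : gaussOrbit Ω m = Ω)
    (lam : ℝ) (hlam : 1 < lam)
    (heig : ((cfMatProd Ω m).map fun z : ℤ => (z : ℝ)).mulVec ![1, Ω] = lam • ![1, Ω]) :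
    ∀ k : Fin 2 → ℤ, inA Ω k →
      (PrimitiveVec Ω (Umat Ω m) k ↔
        (1 / (2 * lam) < |pairω Ω k| ∧ |pairω Ω k| < 1 / 2)) := by
  intro k hk
  obtain ⟨q, hq1, hkq, hksmall⟩ := hk
  have hirr := hquad.1
  have ha := fun j => one_le_cfA h0 h1 hirr j
  set a := cfQ Ω (m+1) with ha_def
  set b := cfQ Ω m with hb_def
  set c := cfP Ω (m+1) with hc_def
  set d := cfP Ω m with hd_def
  have hT : cfMatProd Ω m = !![a, b; c, d] := cfMatProd_eq Ω m
  have hlam0 : (0:ℝ) < lam := lt_trans one_pos hlam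
  -- eigen equations
  have h1e : (a:ℝ) + b * Ω = lam := by
    have h := congrFun heig 0
    simp [hT, Matrix.mulVec, dotProduct, Fin.sum_univ_two, Matrix.map_apply] at h
    exact h
  have h2e : (c:ℝ) + d * Ω = lam * Ω := by
    have h := congrFun heig 1
    simp [hT, Matrix.mulVec, dotProduct, Fin.sum_univ_two, Matrix.map_apply] at h
    exact h
  -- basic entry facts
  have hb1 : (1:ℤ) ≤ b := by
    obtain ⟨n, rfl⟩ := Nat.exists_eq_succ_of_ne_zero (by omega : m ≠ 0)
    exact one_le_cfQ ha n
  have hab : b ≤ a := (cfQ_props ha m).2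
  have hb1R : (1:ℝ) ≤ (b:ℝ) := by exact_mod_cast hb1
  have habR : (b:ℝ) ≤ (a:ℝ) := by exact_mod_cast hab
  have hblam : (b:ℝ) < lam := by nlinarith
  -- sigma
  set σr : ℝ := (-1:ℝ)^m with hσ_def
  have hσ2 : σr * σr = 1 := by rw [hσ_def, ← mul_pow]; norm_num
  have hσabs : |σr| = 1 := by rw [hσ_def, abs_pow, abs_neg, abs_one, one_pow]
  -- determinant
  have hdet : (a:ℝ)*d - b*c = σr := by
    have h := det_cfMatProd Ω m
    rw [hT, Matrix.det_fin_two_of] at h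
    have : ((a*d - b*c : ℤ):ℝ) = (((-1:ℤ)^m : ℤ):ℝ) := by exact_mod_cast h
    push_cast at this
    linarith [this]
  have hdbo : lam * ((d:ℝ) - b*Ω) = σr := by
    linear_combination (-(d:ℝ)) * h1e + (b:ℝ) * h2e + hdet
  -- the image vector k'
  obtain ⟨k', hk'_def⟩ : ∃ v : Fin 2 → ℤ, v = (Umat Ω m)⁻¹.mulVec k := ⟨_, rfl⟩
  have hTt : (cfMatProd Ω m)ᵀ = !![a, c; b, d] := by
    rw [hT]; ext i j; fin_cases i <;> fin_cases j <;> rfl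
  have hk'0 : k' 0 = (-1)^m * (a * k 0 + c * k 1) := by
    rw [hk'_def, Uinv' Ω m, Matrix.smul_mulVec, hTt]
    simp [Matrix.mulVec, dotProduct, Fin.sum_univ_two]
    try ring
  have hk'1 : k' 1 = (-1)^m * (b * k 0 + d * k 1) := by
    rw [hk'_def, Uinv' Ω m, Matrix.smul_mulVec, hTt]
    simp [Matrix.mulVec, dotProduct, Fin.sum_univ_two]
    try ring
  -- key identities
  have hE1 : pairω Ω k' = σr * lam * pairω Ω k := by
    rw [pairω, pairω, hk'0, hk'1]
    push_cast
    linear_combination (σr * (k 0 : ℝ)) * h1e + (σr * (k 1 : ℝ)) * h2e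
  have hE2 : lam * (k' 1 : ℝ) = (k 1 : ℝ) + σr * b * lam * pairω Ω k := by
    rw [hk'1, pairω]
    push_cast
    linear_combination (σr * (k 1 : ℝ)) * ((by linarith [hdbo] : (d:ℝ)*lam - b*Ω*lam = σr)) + (k 1 : ℝ) * hσ2
  have habs' : |pairω Ω k'| = lam * |pairω Ω k| := by
    rw [hE1, abs_mul, abs_mul, hσabs, abs_of_pos hlam0, one_mul]
  -- nonvanishing of the pairing
  have hk1q : k 1 = q := by rw [hkq]; rfl
  have hk1R : (1:ℝ) ≤ (k 1 : ℝ) := by rw [hk1q]; exact_mod_cast hq1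
  have hk1ne : k 1 ≠ 0 := by rw [hk1q]; omega
  have hpirr : Irrational (pairω Ω k) := by
    rw [pairω]
    exact (hirr.intCast_mul hk1ne).intCast_add _
  have hpne : pairω Ω k ≠ 0 := hpirr.ne_zero
  -- KEY: if |pair| ≤ 1/(2 lam) then k' ∈ A
  have key : |pairω Ω k| ≤ 1 / (2*lam) → inA Ω k' := by
    intro hle
    have hlt : |pairω Ω k| < 1 / (2*lam) := by
      rcases lt_or_eq_of_le hle with h | h
      · exact h
      · exfalso
        have h2 : |pairω Ω k'| = 1/2 := by
          rw [habs', h]; field_simp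
        by_cases hz : k' 1 = 0
        · have hp' : pairω Ω k' = (k' 0 : ℝ) := by rw [pairω, hz]; simp
          rw [hp'] at h2
          have h3 : ((2 * |k' 0| : ℤ) : ℝ) = ((1:ℤ):ℝ) := by push_cast; linarith
          have h4 : (2 * |k' 0| : ℤ) = 1 := Int.cast_injective h3
          omega
        · have hirr' : Irrational (pairω Ω k') := by
            rw [pairω]; exact (hirr.intCast_mul hz).intCast_add _
          rcases (abs_eq (by norm_num : (0:ℝ) ≤ 1/2)).mp h2 with he | he
          · exact hirr' ⟨1/2, by rw [he]; norm_num⟩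
          · exact hirr' ⟨-(1/2), by rw [he]; norm_num⟩
    have hsm' : |pairω Ω k'| < 1/2 := by
      rw [habs']
      have h5 := (mul_lt_mul_iff_right₀ hlam0).mpr hlt
      have h6 : lam * (1/(2*lam)) = 1/2 := by field_simp
      linarith
    -- |sigma b lam pair| < b/2
    have habs2 : |σr * (b:ℝ) * lam * pairω Ω k| = (b:ℝ) * lam * |pairω Ω k| := by
      rw [abs_mul, abs_mul, abs_mul, hσabs, abs_of_pos hlam0,
        abs_of_nonneg (by linarith : (0:ℝ) ≤ (b:ℝ)), one_mul]
    have h5 : (b:ℝ) * lam * |pairω Ω k| < (b:ℝ)/2 := by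
      have hbl : (0:ℝ) < (b:ℝ) * lam := by nlinarith
      have h7 := (mul_lt_mul_iff_right₀ hbl).mpr hlt
      have h8 : (b:ℝ) * lam * (1/(2*lam)) = (b:ℝ)/2 := by field_simp
      linarith
    -- k' 1  ≥ 1
    have hlb : lam * (k' 1 : ℝ) > 1 - lam/2 := by
      have := neg_abs_le (σr * (b:ℝ) * lam * pairω Ω k)
      rw [habs2] at this
      have hbl2 : (b:ℝ)/2 < lam/2 := by linarith
      linarith [hE2, h5, hk1R]
    have hq'nn : (0:ℤ) ≤ k' 1 := by
      have hgt : (-1:ℝ) < (k' 1 : ℝ) := by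
        by_contra hco
        push_neg at hco
        have h10 : lam * (k' 1 : ℝ) ≤ lam * (-1) :=
          mul_le_mul_of_nonneg_left hco (le_of_lt hlam0)
        linarith
      have : (-1:ℤ) < k' 1 := by exact_mod_cast hgt
      omega
    have hq'ne : k' 1 ≠ 0 := by
      intro hz
      have hp' : pairω Ω k' = (k' 0 : ℝ) := by rw [pairω, hz]; simp
      have hne' : pairω Ω k' ≠ 0 := by
        rw [hE1]
        have hσne : σr ≠ 0 := by
          intro h; rw [h, abs_zero] at hσabs; norm_num at hσabs
        exact mul_ne_zero (mul_ne_zero hσne (ne_of_gt hlam0)) hpne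
      have hk'0ne : k' 0 ≠ 0 := by
        intro h; rw [hp', h] at hne'; exact hne' (by norm_num)
      have := Int.one_le_abs hk'0ne
      have : (1:ℝ) ≤ |(k' 0 : ℝ)| := by
        rw [← Int.cast_abs]; exact_mod_cast this
      rw [hp'] at hsm'
      linarith
    have hq'1 : (1:ℤ) ≤ k' 1 := by omega
    refine ⟨k' 1, hq'1, ?_, hsm'⟩
    have hp0 : p0 Ω (k' 1) = -(k' 0) := by
      apply round_eq_of_abs_lt'
      have : ((k' 1 : ℝ) * Ω - ((-(k' 0) : ℤ) : ℝ)) = pairω Ω k' := by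
        rw [pairω]; push_cast; ring
      rw [this]
      exact hsm'
    funext i
    fin_cases i
    · show k' 0 = kzero Ω (k' 1) 0
      rw [kzero]; simp [hp0]
    · show k' 1 = kzero Ω (k' 1) 1
      rw [kzero]; simp
  rw [show PrimitiveVec Ω (Umat Ω m) k = (inA Ω k ∧ ¬inA Ω k') from by rw [PrimitiveVec, hk'_def]]
  constructor
  · rintro ⟨-, hnot⟩
    refine ⟨?_, hksmall⟩
    by_contra hle
    push_neg at hle
    exact hnot (key hle)
  · rintro ⟨hgt, -⟩
    refine ⟨⟨q, hq1, hkq, hksmall⟩, ?_⟩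
    rintro ⟨q', -, -, hsmall'⟩
    rw [habs'] at hsmall'
    have h9 : lam * (1/(2*lam)) = 1/2 := by field_simp
    have h10 := (mul_lt_mul_iff_right₀ hlam0).mpr hgt
    linarith
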